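/- Suppose I contains an unbounded subset of κ. Then the class of I-analytic subsets of ν^κ is closed under unions of size at most 2^κ. Consequently, every subset of ν^κ is I-analytic. -/

import Mathlib

open Set Cardinal TopologicalSpace

/-- A κ-complete proper ideal on κ extending the ideal of bounded sets. -/
structure IsGoodIdeal (κ : Type) [LinearOrder κ] (I : Set (Set κ)) : Prop where
  lower : ∀ ⦃A B : Set κ⦄, A ⊆ B → B ∈ I → A ∈ I
  complete : ∀ J : Set (Set κ), J ⊆ I → #J < #κ → ⋃₀ J ∈ I
  proper : (Set.univ : Set κ) ∉ I
  bounded_mem : ∀ s : Set κ, Set.Bounded (· < ·) s → s ∈ I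

/-- The basic cone `N_f` determined by the restriction of `f` to `D`. -/
def cone {κ ν : Type} (D : Set κ) (f : κ → ν) : Set (κ → ν) :=
  {x | ∀ α ∈ D, x α = f α}

/-- The ideal topology `τ_I` on `ν^κ`. -/
def idealTop {κ : Type} (I : Set (Set κ)) (ν : Type) : TopologicalSpace (κ → ν) :=
  TopologicalSpace.generateFrom {S | ∃ D ∈ I, ∃ f : κ → ν, S = cone D f}

/-- The bounded topology `τ_b` on `ν^κ`. -/
def boundedTop (κ ν : Type) [LinearOrder κ] : TopologicalSpace (κ → ν) :=
  TopologicalSpace.generateFrom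
    {S | ∃ D : Set κ, Set.Bounded (· < ·) D ∧ ∃ f : κ → ν, S = cone D f}

/-- `A ⊆ ν^κ` is `I`-analytic: empty or an `I`-continuous image of an `I`-closed
subset of `κ^κ`. -/
def IAnalytic {κ : Type} (I : Set (Set κ)) (ν : Type) (A : Set (κ → ν)) : Prop :=
  A = ∅ ∨ ∃ (C : Set (κ → κ)) (Φ : (κ → κ) → (κ → ν)),
    @IsClosed _ (idealTop I κ) C ∧
    @Continuous _ _ (idealTop I κ) (idealTop I ν) Φ ∧ Φ '' C = A

lemma cone_isOpen {κ ν : Type} {I : Set (Set κ)} {D : Set κ} (hD : D ∈ I) (f : κ → ν) :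
    @IsOpen _ (idealTop I ν) (cone D f) :=
  TopologicalSpace.isOpen_generateFrom_of_mem ⟨D, hD, f, rfl⟩

/-- Any map factoring through restriction to a set `D ∈ I` is `I`-continuous. -/
lemma factor_continuous {κ ν : Type} {I : Set (Set κ)} {D : Set κ} (hD : D ∈ I)
    (Φ : (κ → κ) → (κ → ν)) (hΦ : ∀ x y : κ → κ, (∀ α ∈ D, x α = y α) → Φ x = Φ y) :
    @Continuous _ _ (idealTop I κ) (idealTop I ν) Φ := by
  letI t1 : TopologicalSpace (κ → κ) := idealTop I κ
  letI t2 : TopologicalSpace (κ → ν) := idealTop I ν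
  rw [continuous_def]
  intro S _
  have hrw : Φ ⁻¹' S = ⋃ x ∈ Φ ⁻¹' S, cone D x := by
    ext y
    simp only [mem_iUnion, mem_preimage, exists_prop]
    constructor
    · intro hy
      exact ⟨y, hy, fun α _ => rfl⟩
    · rintro ⟨x, hx, hyx⟩
      have := hΦ y x hyx
      rw [this]
      exact hx
  rw [hrw]
  exact isOpen_biUnion fun x _ => cone_isOpen hD x

/-- There is a set in `I` of full cardinality. -/
lemma exists_big {κ : Type} [LinearOrder κ] (hunc : ℵ₀ < #κ) {I : Set (Set κ)}
    (hI : IsGoodIdeal κ I) (hU : ∃ U ∈ I, ¬ Set.Bounded (· < ·) U) :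
    ∃ D ∈ I, #D = #κ := by
  by_cases hb : ∃ B : Set κ, Set.Bounded (· < ·) B ∧ ¬ #B < #κ
  · obtain ⟨B, hBb, hBc⟩ := hb
    exact ⟨B, hI.bounded_mem B hBb, le_antisymm (Cardinal.mk_set_le B) (le_of_not_gt hBc)⟩
  push_neg at hb
  obtain ⟨U, hUI, hUu⟩ := hU
  refine ⟨U, hUI, le_antisymm (Cardinal.mk_set_le U) ?_⟩
  by_contra hlt
  rw [not_le] at hlt
  set J : Set (Set κ) := insert U ((fun b => {x | x < b}) '' U) with hJ
  have hJI : J ⊆ I := by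
    rintro S hS
    rcases hS with rfl | ⟨b, hbU, rfl⟩
    · exact hUI
    · exact hI.bounded_mem _ ⟨b, fun x hx => hx⟩
  have hJc : #J < #κ := by
    have h1 : #J ≤ #(((fun b => {x | x < b}) '' U) : Set (Set κ)) + 1 :=
      Cardinal.mk_insert_le
    have h2 : #(((fun b => {x | x < b}) '' U) : Set (Set κ)) ≤ #U :=
      Cardinal.mk_image_le
    have h3 : (1 : Cardinal) < #κ := lt_trans Cardinal.one_lt_aleph0 hunc
    calc #J ≤ #(((fun b => {x | x < b}) '' U) : Set (Set κ)) + 1 := h1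
      _ ≤ #U + 1 := by exact add_le_add_left h2 1
      _ < #κ := Cardinal.add_lt_of_lt (le_of_lt hunc) hlt h3
  have huniv : ⋃₀ J = Set.univ := by
    ext a
    simp only [mem_univ, iff_true, mem_sUnion]
    rw [Set.Bounded] at hUu
    push_neg at hUu
    obtain ⟨b, hbU, hba⟩ := hUu a
    rcases eq_or_lt_of_le hba with heq | hab
    · exact ⟨U, Set.mem_insert _ _, by rw [heq]; exact hbU⟩
    · exact ⟨{x | x < b}, Set.mem_insert_of_mem _ ⟨b, hbU, rfl⟩, hab⟩
  exact hI.proper (huniv ▸ hI.complete J hJI hJc)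

/-- if `I` contains an unbounded set, the `I`-analytic sets are closed
under unions of size at most `2^κ`; consequently every subset of `ν^κ` is `I`-analytic. -/
theorem stmt_16 (κ ν : Type) [LinearOrder κ]
    (hreg : (#κ).IsRegular) (hunc : ℵ₀ < #κ) (hν : #ν = 2 ∨ #ν = #κ)
    (I : Set (Set κ)) (hI : IsGoodIdeal κ I)
    (hU : ∃ U ∈ I, ¬ Set.Bounded (· < ·) U) :
    (∀ (ι : Type) (A : ι → Set (κ → ν)), #ι ≤ (2 : Cardinal) ^ #κ →
        (∀ i, IAnalytic I ν (A i)) → IAnalytic I ν (⋃ i, A i)) ∧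
    (∀ A : Set (κ → ν), IAnalytic I ν A) := by
  have key : ∀ A : Set (κ → ν), IAnalytic I ν A := by
    intro A
    rcases eq_empty_or_nonempty A with rfl | hA
    · exact Or.inl rfl
    right
    obtain ⟨D, hDI, hDc⟩ := exists_big hunc hI hU
    have hκne : Nonempty κ := by
      rw [← Cardinal.mk_ne_zero_iff]
      exact ne_of_gt (lt_trans Cardinal.aleph0_pos hunc)
    have hν' : #ν ≤ #κ := by
      rcases hν with h | h
      · rw [h]
        have h2 : (2 : Cardinal) < ℵ₀ := by
          exact_mod_cast Cardinal.nat_lt_aleph0 2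
        exact le_of_lt (h2.trans hunc)
      · exact h.le
    have hcard : #A ≤ #(↥D → κ) := by
      have h1 : #A ≤ #(κ → ν) := Cardinal.mk_set_le A
      have h2 : #(κ → ν) = #ν ^ #κ := (Cardinal.power_def ν κ).symm
      have h3 : #ν ^ #κ ≤ #κ ^ #κ := Cardinal.power_le_power_right hν'
      have h4 : (#κ : Cardinal) ^ #κ = #κ ^ #(↥D) := by rw [hDc]
      have h5 : (#κ : Cardinal) ^ #(↥D) = #(↥D → κ) := Cardinal.power_def κ ↥D
      calc #A ≤ #(κ → ν) := h1
        _ = #ν ^ #κ := h2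
        _ ≤ #κ ^ #κ := h3
        _ = #κ ^ #(↥D) := h4
        _ = #(↥D → κ) := h5
    obtain ⟨e⟩ := (Cardinal.le_def _ _).mp hcard
    haveI : Nonempty ↥A := hA.to_subtype
    set g : (↥D → κ) → ↥A := Function.invFun e with hg_def
    have hg : Function.Surjective g := Function.invFun_surjective e.injective
    set Φ : (κ → κ) → (κ → ν) := fun x => (g (fun α => x α.1) : κ → ν) with hΦ_def
    refine ⟨Set.univ, Φ, @isClosed_univ _ (idealTop I κ), ?_, ?_⟩
    · apply factor_continuous hDI
      intro x y hxy
      have hfun : (fun α : ↥D => x α.1) = fun α : ↥D => y α.1 :=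
        funext fun α => hxy α.1 α.2
      simp only [hΦ_def, hfun]
    · rw [Set.image_univ]
      ext v
      constructor
      · rintro ⟨x, rfl⟩
        exact (g _).2
      · intro hv
        obtain ⟨s, hs⟩ := hg ⟨v, hv⟩
        classical
        refine ⟨fun α => if h : α ∈ D then s ⟨α, h⟩ else Classical.arbitrary κ, ?_⟩
        have hres : (fun α : ↥D =>
            (fun β => if h : β ∈ D then s ⟨β, h⟩ else Classical.arbitrary κ) α.1) = s := by
          funext α
          simp only [dif_pos α.2]
        simp only [hΦ_def, hres, hs]
  exact ⟨fun ι A _ _ => key _, key⟩
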